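/- Let R be a ring, δ a derivation on R, and S = R[x; δ] the skew polynomial ring of derivation type (so x·r = r·x + δ(r) for r ∈ R). Let δ₁ be another derivation of R. Then δ₁ extends to a derivation of S with δ₁(x) = 0 (acting coefficientwise) if and only if δ₁ ∘ δ = δ ∘ δ₁. -/

import Mathlib

/-- Grzeszczuk's lemma: in the skew polynomial ring `S = R[x; δ]` of derivation
type (modelled by a ring `S`, an injective ring hom `ι : R →+* S` and an element
`X` with `X * ι r = ι r * X + ι (δ r)`, in which every element has a unique
representation `∑ ι rᵢ * Xⁱ`), the coefficientwise extension `D` of a derivation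
`δ₁` of `R` with `D X = 0` is a derivation of `S` if and only if `δ₁` commutes
with `δ`. -/
theorem extend_derivation_iff_commutes {R S : Type*} [Ring R] [Ring S]
    (δ δ₁ : R → R)
    (hδadd : ∀ a b : R, δ (a + b) = δ a + δ b)
    (hδmul : ∀ a b : R, δ (a * b) = a * δ b + δ a * b)
    (hδ₁add : ∀ a b : R, δ₁ (a + b) = δ₁ a + δ₁ b)
    (hδ₁mul : ∀ a b : R, δ₁ (a * b) = a * δ₁ b + δ₁ a * b)
    (ι : R →+* S) (hι : Function.Injective ι) (X : S)
    (hcomm : ∀ r : R, X * ι r = ι r * X + ι (δ r))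
    (hrepr : ∀ s : S, ∃! c : ℕ →₀ R, s = c.sum fun i r => ι r * X ^ i)
    (D : S → S)
    (hD : ∀ c : ℕ →₀ R,
      D (c.sum fun i r => ι r * X ^ i) = c.sum fun i r => ι (δ₁ r) * X ^ i) :
    (∀ a b : S, D (a * b) = D a * b + a * D b) ↔ (∀ r : R, δ₁ (δ r) = δ (δ₁ r)) := by
  have hδ₁zero : δ₁ 0 = 0 := by
    have h := hδ₁add 0 0
    rw [add_zero] at h
    exact left_eq_add.mp h
  have hδ₁one : δ₁ 1 = 0 := by
    have h := hδ₁mul 1 1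
    simp only [one_mul, mul_one] at h
    exact left_eq_add.mp h
  have hf0 : ∀ i : ℕ, ι (0 : R) * X ^ i = 0 := fun i => by rw [map_zero, zero_mul]
  have hfadd : ∀ (i : ℕ) (a b : R), ι (a + b) * X ^ i = ι a * X ^ i + ι b * X ^ i :=
    fun i a b => by rw [map_add, add_mul]
  have hg0 : ∀ i : ℕ, ι (δ₁ (0 : R)) * X ^ i = 0 := fun i => by
    rw [hδ₁zero, map_zero, zero_mul]
  have hgadd : ∀ (i : ℕ) (a b : R),
      ι (δ₁ (a + b)) * X ^ i = ι (δ₁ a) * X ^ i + ι (δ₁ b) * X ^ i :=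
    fun i a b => by rw [hδ₁add, map_add, add_mul]
  have hDsingle : ∀ (i : ℕ) (r : R), D (ι r * X ^ i) = ι (δ₁ r) * X ^ i := by
    intro i r
    have h1 : (Finsupp.single i r).sum (fun i r => ι r * X ^ i) = ι r * X ^ i :=
      Finsupp.sum_single_index (hf0 i)
    have h2 : (Finsupp.single i r).sum (fun i r => ι (δ₁ r) * X ^ i) = ι (δ₁ r) * X ^ i :=
      Finsupp.sum_single_index (hg0 i)
    rw [← h1, hD, h2]
  have hDι : ∀ r : R, D (ι r) = ι (δ₁ r) := by
    intro r
    have h := hDsingle 0 r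
    rwa [pow_zero, mul_one, mul_one] at h
  have hDX : D X = 0 := by
    have h := hDsingle 1 1
    rwa [map_one, one_mul, pow_one, hδ₁one, map_zero, zero_mul] at h
  have hDadd : ∀ a b : S, D (a + b) = D a + D b := by
    intro a b
    obtain ⟨c, hc, -⟩ := hrepr a
    obtain ⟨d, hd, -⟩ := hrepr b
    have h1 : a + b = (c + d).sum fun i r => ι r * X ^ i := by
      rw [Finsupp.sum_add_index' hf0 hfadd, hc, hd]
    rw [h1, hD, Finsupp.sum_add_index' hg0 hgadd, hc, hd, hD, hD]
  have hDsum : ∀ (c : ℕ →₀ R) (h : ℕ → R → S),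
      D (c.sum h) = c.sum fun i r => D (h i r) := fun c h =>
    map_finsuppSum (AddMonoidHom.mk' D hDadd) c h
  have hDmulX : ∀ s : S, D (s * X) = D s * X := by
    intro s
    obtain ⟨c, hc, -⟩ := hrepr s
    have h1 : s * X = (Finsupp.mapDomain (· + 1) c).sum fun i r => ι r * X ^ i := by
      rw [Finsupp.sum_mapDomain_index hf0 hfadd, hc, Finsupp.sum_mul]
      exact Finsupp.sum_congr fun i _ => by rw [pow_succ, ← mul_assoc]
    rw [h1, hD, Finsupp.sum_mapDomain_index hg0 hgadd, hc, hD, Finsupp.sum_mul]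
    exact Finsupp.sum_congr fun i _ => by rw [pow_succ, ← mul_assoc]
  constructor
  · intro hder r
    have e1 : D (ι r * X) = ι (δ₁ r) * X := by
      have h := hDsingle 1 r
      rwa [pow_one] at h
    have h1 : D (X * ι r) = ι (δ₁ r) * X + ι (δ₁ (δ r)) := by
      rw [hcomm r, hDadd, e1, hDι]
    have h2 : D (X * ι r) = ι (δ₁ r) * X + ι (δ (δ₁ r)) := by
      rw [hder, hDX, zero_mul, zero_add, hDι, hcomm]
    exact hι (add_left_cancel (h1.symm.trans h2))
  · intro hc
    have key : ∀ (i : ℕ) (t r : R), D (ι t * X ^ i * ι r)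
        = D (ι t * X ^ i) * ι r + ι t * X ^ i * ι (δ₁ r) := by
      intro i
      induction i with
      | zero =>
        intro t r
        simp only [pow_zero, mul_one]
        rw [← map_mul, hDι, hDι, hδ₁mul, map_add, map_mul, map_mul, add_comm]
      | succ i ih =>
        intro t r
        have hu : ι t * X ^ (i + 1) = ι t * X ^ i * X := by rw [pow_succ, mul_assoc]
        rw [hu]
        have expand : ι t * X ^ i * X * ι r
            = (ι t * X ^ i * ι r) * X + ι t * X ^ i * ι (δ r) := by
          rw [mul_assoc, hcomm r, mul_add, ← mul_assoc]
        rw [expand, hDadd, hDmulX (ι t * X ^ i * ι r), ih t r, ih t (δ r), hc r,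
          hDmulX (ι t * X ^ i), mul_assoc (D (ι t * X ^ i)) X (ι r),
          mul_assoc (ι t * X ^ i) X (ι (δ₁ r)), hcomm r, hcomm (δ₁ r)]
        simp only [mul_add, add_mul, mul_assoc]
        abel
    have hDmulXpow : ∀ (s : S) (i : ℕ), D (s * X ^ i) = D s * X ^ i := by
      intro s i
      induction i with
      | zero => rw [pow_zero, mul_one, mul_one]
      | succ i ih => rw [pow_succ, ← mul_assoc, hDmulX, ih, mul_assoc]
    have key2 : ∀ (a : S) (r : R), D (a * ι r) = D a * ι r + a * ι (δ₁ r) := by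
      intro a r
      obtain ⟨c, hcs, -⟩ := hrepr a
      rw [hcs]
      calc D ((c.sum fun i t => ι t * X ^ i) * ι r)
          = D (c.sum fun i t => ι t * X ^ i * ι r) := by rw [Finsupp.sum_mul]
        _ = c.sum fun i t => D (ι t * X ^ i * ι r) := hDsum _ _
        _ = c.sum fun i t => (ι (δ₁ t) * X ^ i) * ι r + ι t * X ^ i * ι (δ₁ r) :=
            Finsupp.sum_congr fun i _ => by rw [key i (c i) r, hDsingle]
        _ = (c.sum fun i t => ι (δ₁ t) * X ^ i) * ι r
              + (c.sum fun i t => ι t * X ^ i) * ι (δ₁ r) := by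
            rw [Finsupp.sum_add, Finsupp.sum_mul, Finsupp.sum_mul]
        _ = D (c.sum fun i t => ι t * X ^ i) * ι r
              + (c.sum fun i t => ι t * X ^ i) * ι (δ₁ r) := by rw [hD]
    intro a b
    obtain ⟨d, hds, -⟩ := hrepr b
    rw [hds]
    calc D (a * d.sum fun i r => ι r * X ^ i)
        = D (d.sum fun i r => a * (ι r * X ^ i)) := by rw [Finsupp.mul_sum]
      _ = d.sum fun i r => D (a * (ι r * X ^ i)) := hDsum _ _
      _ = d.sum fun i r => D a * (ι r * X ^ i) + a * (ι (δ₁ r) * X ^ i) :=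
          Finsupp.sum_congr fun i _ => by
            rw [← mul_assoc, hDmulXpow, key2, add_mul, mul_assoc, mul_assoc]
      _ = (d.sum fun i r => D a * (ι r * X ^ i))
            + d.sum fun i r => a * (ι (δ₁ r) * X ^ i) := Finsupp.sum_add
      _ = D a * (d.sum fun i r => ι r * X ^ i)
            + a * (d.sum fun i r => ι (δ₁ r) * X ^ i) := by
          rw [Finsupp.mul_sum, Finsupp.mul_sum]
      _ = D a * (d.sum fun i r => ι r * X ^ i)
            + a * D (d.sum fun i r => ι r * X ^ i) := by rw [hD]
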